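/- For every a ∈ [0,1), every t ≥ 0 and every bounded continuous g : [0,∞) → ℝ, the random variable (1/N) Σ_{i=1}^N g(w_i^{(N)}) χ_{y_{i,0}^{(N)} ≥ a} χ_{τ_i^{(N)} > t} converges in probability, as N → ∞, to ∫_a^1 ∫_{[0,∞)} g(w) e^{−wt} μ_{z,0}(dw) dz. -/

import Mathlib

open MeasureTheory ProbabilityTheory Filter Topology Real Set NNReal BoundedContinuousFunction

noncomputable section

noncomputable def expBCF (t : ℝ) (ht : 0 ≤ t) : ℝ≥0 →ᵇ ℝ :=
  BoundedContinuousFunction.ofNormedAddCommGroup (fun w : ℝ≥0 => rexp (-(w : ℝ) * t))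
    (by continuity) 1 (fun w => by
      rw [Real.norm_eq_abs, abs_of_pos (Real.exp_pos _)]
      refine Real.exp_le_one_iff.mpr ?_
      rw [neg_mul, neg_nonpos]
      exact mul_nonneg w.coe_nonneg ht)

lemma inv_mul_sum_abs_le {N : ℕ} (f : Fin N → ℝ) {C : ℝ} (hC : 0 ≤ C)
    (hf : ∀ i, |f i| ≤ C) : |(N:ℝ)⁻¹ * ∑ i, f i| ≤ C := by
  have h1 : |∑ i, f i| ≤ (N:ℝ) * C := by
    calc |∑ i, f i| ≤ ∑ i, |f i| := Finset.abs_sum_le_sum_abs _ _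
      _ ≤ ∑ _i : Fin N, C := Finset.sum_le_sum fun i _ => hf i
      _ = (N:ℝ) * C := by simp [Finset.sum_const, nsmul_eq_mul]
  have hNN : (N:ℝ)⁻¹ * (N:ℝ) ≤ 1 := by
    rcases Nat.eq_zero_or_pos N with h0 | h0
    · simp [h0]
    · rw [inv_mul_cancel₀ (by exact_mod_cast h0.ne' : (N:ℝ) ≠ 0)]
  calc |(N:ℝ)⁻¹ * ∑ i, f i| = (N:ℝ)⁻¹ * |∑ i, f i| := by
        rw [abs_mul, abs_of_nonneg (by positivity : (0:ℝ) ≤ (N:ℝ)⁻¹)]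
    _ ≤ (N:ℝ)⁻¹ * ((N:ℝ) * C) := mul_le_mul_of_nonneg_left h1 (by positivity)
    _ = ((N:ℝ)⁻¹ * (N:ℝ)) * C := by ring
    _ ≤ 1 * C := mul_le_mul_of_nonneg_right hNN hC
    _ = C := one_mul C


private lemma perm_mem {N : ℕ} {x0 : Fin N → ℕ}
    (hx0 : ∀ k ∈ Finset.Icc 1 N, ∃! i : Fin N, x0 i = k) (i : Fin N) :
    x0 i ∈ Finset.Icc 1 N := by
  classical
  let f : (Finset.Icc 1 N : Finset ℕ) → Fin N := fun k => (hx0 k.1 k.2).choose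
  have hf : ∀ k, x0 (f k) = k.1 := fun k => (hx0 k.1 k.2).choose_spec.1
  have hinj : Function.Injective f := by
    intro k k' hkk'
    have : (k : ℕ) = k' := by rw [← hf k, ← hf k', hkk']
    exact Subtype.ext this
  have hcard : Fintype.card (Finset.Icc 1 N : Finset ℕ) = Fintype.card (Fin N) := by
    simp [Fintype.card_coe, Nat.card_Icc]
  have hbij : Function.Bijective f :=
    (Fintype.bijective_iff_injective_and_card f).mpr ⟨hinj, hcard⟩
  obtain ⟨k, hk⟩ := hbij.2 i
  rw [← hk, hf k]
  exact k.2

private lemma det_conv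
    {w : (N : ℕ) → Fin N → ℝ≥0}
    {x0 : (N : ℕ) → Fin N → ℕ}
    (hx0 : ∀ N, ∀ k ∈ Finset.Icc 1 N, ∃! i : Fin N, x0 N i = k)
    {y0 : (N : ℕ) → Fin N → ℝ}
    (hy0 : ∀ N i, y0 N i = ((x0 N i : ℝ) - 1) / N)
    {φ : ℝ → ℝ} {B : ℝ} (hφB : ∀ z, |φ z| ≤ B)
    (hφint : ∀ u v : ℝ, IntervalIntegrable φ volume u v)
    {h : ℝ≥0 → ℝ} (hhB : ∀ x, |h x| ≤ B)
    (hinit : Tendsto (fun N : ℕ => ⨆ y : Ico (0 : ℝ) 1,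
        |(N : ℝ)⁻¹ * (∑ i : Fin N, h (w N i) * (if y0 N i ≤ (y : ℝ) then (1 : ℝ) else 0))
          - ∫ z in (0 : ℝ)..(y : ℝ), φ z|) atTop (𝓝 0))
    {a : ℝ} (ha : a ∈ Ico (0:ℝ) 1) :
    Tendsto (fun N : ℕ => (N:ℝ)⁻¹ * ∑ i : Fin N, h (w N i) * (if a ≤ y0 N i then (1:ℝ) else 0))
      atTop (𝓝 (∫ z in a..1, φ z)) := by
  have hB0 : 0 ≤ B := le_trans (abs_nonneg _) (hφB 0)
  set A : ℕ → ℝ → ℝ := fun N y =>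
    (N:ℝ)⁻¹ * ∑ i : Fin N, h (w N i) * (if y0 N i ≤ y then (1:ℝ) else 0) with hA
  set SUP : ℕ → ℝ := fun N => ⨆ y : Ico (0 : ℝ) 1,
      |A N (y:ℝ) - ∫ z in (0 : ℝ)..(y : ℝ), φ z| with hSUP
  have hinit' : Tendsto SUP atTop (𝓝 0) := hinit
  set D : ℕ → ℝ := fun N =>
    (N:ℝ)⁻¹ * ∑ i : Fin N, h (w N i) * (if a ≤ y0 N i then (1:ℝ) else 0) with hDdef
  set L : ℝ := ∫ z in a..1, φ z with hL
  -- bounds on A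
  have hAle : ∀ (N : ℕ) (y : ℝ), |A N y| ≤ B := by
    intro N y
    have h1 : |∑ i : Fin N, h (w N i) * (if y0 N i ≤ y then (1:ℝ) else 0)| ≤ (N:ℝ) * B := by
      calc |∑ i : Fin N, h (w N i) * (if y0 N i ≤ y then (1:ℝ) else 0)|
          ≤ ∑ i : Fin N, |h (w N i) * (if y0 N i ≤ y then (1:ℝ) else 0)| :=
            Finset.abs_sum_le_sum_abs _ _
        _ ≤ ∑ _i : Fin N, B := by
            refine Finset.sum_le_sum fun i _ => ?_
            split
            · rw [mul_one]; exact hhB _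
            · rw [mul_zero, abs_zero]; exact hB0
        _ = (N:ℝ) * B := by simp [Finset.sum_const, nsmul_eq_mul]
    have hNN : (N:ℝ)⁻¹ * (N:ℝ) ≤ 1 := by
      rcases Nat.eq_zero_or_pos N with h0 | h0
      · simp [h0]
      · rw [inv_mul_cancel₀ (by exact_mod_cast h0.ne' : (N:ℝ) ≠ 0)]
    calc |A N y| = (N:ℝ)⁻¹ * |∑ i : Fin N, h (w N i) * (if y0 N i ≤ y then (1:ℝ) else 0)| := by
          rw [hA, abs_mul, abs_of_nonneg (by positivity : (0:ℝ) ≤ (N:ℝ)⁻¹)]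
      _ ≤ (N:ℝ)⁻¹ * ((N:ℝ) * B) := by
          exact mul_le_mul_of_nonneg_left h1 (by positivity)
      _ = ((N:ℝ)⁻¹ * (N:ℝ)) * B := by ring
      _ ≤ 1 * B := mul_le_mul_of_nonneg_right hNN hB0
      _ = B := one_mul B
  have hIle : ∀ u v : ℝ, |∫ z in u..v, φ z| ≤ B * |v - u| := by
    intro u v
    rw [← Real.norm_eq_abs]
    exact intervalIntegral.norm_integral_le_of_norm_le_const fun x _ => by
      rw [Real.norm_eq_abs]; exact hφB x
  have hbdd : ∀ N : ℕ, BddAbove (range (fun y : Ico (0:ℝ) 1 =>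
      |A N (y:ℝ) - ∫ z in (0 : ℝ)..(y : ℝ), φ z|)) := by
    intro N
    refine ⟨2 * B, ?_⟩
    rintro x ⟨y, rfl⟩
    have h2 := hIle 0 (y:ℝ)
    have h3 : |(y:ℝ) - 0| ≤ 1 := by
      rw [sub_zero, abs_of_nonneg y.2.1]; exact y.2.2.le
    have h4 : B * |(y:ℝ) - 0| ≤ B * 1 := mul_le_mul_of_nonneg_left h3 hB0
    have := hAle N (y:ℝ)
    calc |A N (y:ℝ) - ∫ z in (0 : ℝ)..(y : ℝ), φ z|
        ≤ |A N (y:ℝ)| + |∫ z in (0 : ℝ)..(y : ℝ), φ z| := abs_sub _ _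
      _ ≤ B + B * 1 := add_le_add this (le_trans h2 h4)
      _ = 2 * B := by ring
  have hle : ∀ (N : ℕ) (y : ℝ), y ∈ Ico (0:ℝ) 1 →
      |A N y - ∫ z in (0 : ℝ)..y, φ z| ≤ SUP N := by
    intro N y hy
    exact le_ciSup (hbdd N) (⟨y, hy⟩ : Ico (0:ℝ) 1)
  -- key per-N bound
  have key : ∀ N : ℕ, 1 ≤ N → |D N - L| ≤ 2 * SUP N + 2 * B * (N:ℝ)⁻¹ := by
    intro N hN
    have hNpos : (0:ℝ) < N := by exact_mod_cast hN
    have hxi : ∀ i : Fin N, 1 ≤ x0 N i ∧ x0 N i ≤ N := fun i =>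
      Finset.mem_Icc.mp (perm_mem (hx0 N) i)
    have hy0i : ∀ i : Fin N, 0 ≤ y0 N i ∧ y0 N i ≤ ((N:ℝ) - 1)/N := by
      intro i
      rw [hy0]
      constructor
      · apply div_nonneg _ hNpos.le
        have : (1:ℝ) ≤ (x0 N i : ℝ) := by exact_mod_cast (hxi i).1
        linarith
      · refine (div_le_div_iff_of_pos_right hNpos).mpr ?_
        have : (x0 N i : ℝ) ≤ (N:ℝ) := by exact_mod_cast (hxi i).2
        linarith
    set b : ℝ := ((N:ℝ) - 1)/N with hbdef
    have hb : b ∈ Ico (0:ℝ) 1 := by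
      constructor
      · apply div_nonneg _ hNpos.le
        have : (1:ℝ) ≤ (N:ℝ) := by exact_mod_cast hN
        linarith
      · rw [div_lt_one hNpos]; linarith
    have hsumb : ∑ i : Fin N, h (w N i) * (if y0 N i ≤ b then (1:ℝ) else 0)
        = ∑ i : Fin N, h (w N i) :=
      Finset.sum_congr rfl fun i _ => by rw [if_pos (hy0i i).2, mul_one]
    have hAb : A N b = (N:ℝ)⁻¹ * ∑ i : Fin N, h (w N i) := by
      simp only [hA]
      rw [hsumb]
    have h1b' : (1:ℝ) - b = (N:ℝ)⁻¹ := by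
      rw [hbdef]; field_simp; ring
    have h1b : |(1:ℝ) - b| = (N:ℝ)⁻¹ := by
      rw [h1b', abs_of_nonneg (by positivity : (0:ℝ) ≤ (N:ℝ)⁻¹)]
    have hSUPnn : 0 ≤ SUP N := le_trans (abs_nonneg _) (hle N b hb)
    have e1 := hle N b hb
    have e3 : |∫ z in b..1, φ z| ≤ B * (N:ℝ)⁻¹ := by
      calc |∫ z in b..1, φ z| ≤ B * |1 - b| := hIle b 1
        _ = B * (N:ℝ)⁻¹ := by rw [h1b]
    have hsplit2 : (∫ z in (0:ℝ)..b, φ z) + ∫ z in b..1, φ z = ∫ z in (0:ℝ)..1, φ z :=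
      intervalIntegral.integral_add_adjacent_intervals (hφint 0 b) (hφint b 1)
    have hsplit1 : (∫ z in (0:ℝ)..a, φ z) + ∫ z in a..1, φ z = ∫ z in (0:ℝ)..1, φ z :=
      intervalIntegral.integral_add_adjacent_intervals (hφint 0 a) (hφint a 1)
    rcases eq_or_lt_of_le ha.1 with h0 | h0
    · -- case a = 0
      have hDb : D N = A N b := by
        have hsum0 : ∑ i : Fin N, h (w N i) * (if a ≤ y0 N i then (1:ℝ) else 0)
            = ∑ i : Fin N, h (w N i) :=
          Finset.sum_congr rfl fun i _ => by rw [if_pos (h0 ▸ (hy0i i).1), mul_one]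
        simp only [hDdef, hA]
        rw [hsum0, hsumb]
      have hLsplit : L = (∫ z in (0:ℝ)..b, φ z) + ∫ z in b..1, φ z := by
        rw [hL, hsplit2, ← h0]
      have heq : D N - L = (A N b - ∫ z in (0:ℝ)..b, φ z) - ∫ z in b..1, φ z := by
        rw [hDb, hLsplit]; ring
      rw [heq]
      obtain ⟨l1, r1⟩ := abs_le.mp e1
      obtain ⟨l3, r3⟩ := abs_le.mp e3
      have hBN : 0 ≤ B * (N:ℝ)⁻¹ := by positivity
      refine abs_le.mpr ⟨by linarith, by linarith⟩
    · -- case 0 < a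
      set K : ℤ := ⌈(N:ℝ) * a⌉ with hKdef
      have hK1 : 1 ≤ K := Int.ceil_pos.mpr (by positivity)
      set a' : ℝ := ((K:ℝ) - 1)/N with ha'def
      have ha'0 : 0 ≤ a' := by
        apply div_nonneg _ hNpos.le
        have : (1:ℝ) ≤ (K:ℝ) := by exact_mod_cast hK1
        linarith
      have ha'lt : a' < a := by
        rw [ha'def, div_lt_iff₀ hNpos]
        have := Int.ceil_lt_add_one ((N:ℝ) * a)
        rw [← hKdef] at this
        linarith [this]
      have haa' : a - a' ≤ (N:ℝ)⁻¹ := by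
        have hKa : (N:ℝ) * a ≤ (K:ℝ) := Int.le_ceil _
        rw [ha'def, sub_le_iff_le_add, inv_eq_one_div, ← add_div]
        have hKK : 1 + ((K:ℝ) - 1) = (K:ℝ) := by ring
        rw [hKK, le_div_iff₀ hNpos]
        linarith
      have ha'mem : a' ∈ Ico (0:ℝ) 1 := ⟨ha'0, lt_trans ha'lt ha.2⟩
      have hiff : ∀ i : Fin N, (y0 N i ≤ a' ↔ ¬ a ≤ y0 N i) := by
        intro i
        constructor
        · intro hy
          exact not_le.mpr (lt_of_le_of_lt hy ha'lt)
        · intro hy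
          rw [not_le] at hy
          rw [hy0] at hy ⊢
          rw [div_lt_iff₀ hNpos] at hy
          have hz : ((x0 N i : ℤ) - 1 : ℤ) < K := by
            rw [hKdef, Int.lt_ceil]
            push_cast
            linarith [hy]
          have hz2 : ((x0 N i : ℤ) - 1 : ℤ) ≤ K - 1 := by omega
          have hz3 : ((x0 N i : ℝ) - 1) ≤ (K:ℝ) - 1 := by exact_mod_cast hz2
          rw [ha'def]
          exact (div_le_div_iff_of_pos_right hNpos).mpr hz3
      have hD : D N = A N b - A N a' := by
        have hterm : ∀ i : Fin N, h (w N i) * (if a ≤ y0 N i then (1:ℝ) else 0)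
            = h (w N i) * (if y0 N i ≤ b then (1:ℝ) else 0)
              - h (w N i) * (if y0 N i ≤ a' then (1:ℝ) else 0) := by
          intro i
          rw [if_pos (hy0i i).2]
          by_cases hc : a ≤ y0 N i
          · rw [if_pos hc, if_neg (fun hle' => ((hiff i).mp hle') hc)]; ring
          · rw [if_neg hc, if_pos ((hiff i).mpr hc)]; ring
        have hsum2 : ∑ i : Fin N, h (w N i) * (if a ≤ y0 N i then (1:ℝ) else 0)
            = ∑ i : Fin N, (h (w N i) * (if y0 N i ≤ b then (1:ℝ) else 0)
              - h (w N i) * (if y0 N i ≤ a' then (1:ℝ) else 0)) :=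
          Finset.sum_congr rfl fun i _ => hterm i
        simp only [hDdef, hA]
        rw [hsum2, Finset.sum_sub_distrib, mul_sub]
      have hsplit3 : (∫ z in (0:ℝ)..a', φ z) + ∫ z in a'..a, φ z = ∫ z in (0:ℝ)..a, φ z :=
        intervalIntegral.integral_add_adjacent_intervals (hφint 0 a') (hφint a' a)
      have e2 := hle N a' ha'mem
      have e4 : |∫ z in a'..a, φ z| ≤ B * (N:ℝ)⁻¹ := by
        calc |∫ z in a'..a, φ z| ≤ B * |a - a'| := hIle a' a
          _ ≤ B * (N:ℝ)⁻¹ := by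
              apply mul_le_mul_of_nonneg_left _ hB0
              rw [abs_of_nonneg (by linarith : (0:ℝ) ≤ a - a')]
              exact haa'
      have heq : D N - L = (A N b - ∫ z in (0:ℝ)..b, φ z) - (A N a' - ∫ z in (0:ℝ)..a', φ z)
          - (∫ z in b..1, φ z) + ∫ z in a'..a, φ z := by
        rw [hD, hL]
        have : (∫ z in a..1, φ z) = (∫ z in (0:ℝ)..1, φ z) - ∫ z in (0:ℝ)..a, φ z := by
          rw [← hsplit1]; ring
        rw [this, ← hsplit2, ← hsplit3]
        ring
      rw [heq]
      obtain ⟨l1, r1⟩ := abs_le.mp e1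
      obtain ⟨l2, r2⟩ := abs_le.mp e2
      obtain ⟨l3, r3⟩ := abs_le.mp e3
      obtain ⟨l4, r4⟩ := abs_le.mp e4
      refine abs_le.mpr ⟨by linarith, by linarith⟩
  -- conclusion
  have hRHS : Tendsto (fun N : ℕ => 2 * SUP N + 2 * B * (N:ℝ)⁻¹) atTop (𝓝 0) := by
    have h1 : Tendsto (fun N : ℕ => 2 * SUP N) atTop (𝓝 0) := by
      simpa using hinit'.const_mul 2
    have h2 : Tendsto (fun N : ℕ => 2 * B * (N:ℝ)⁻¹) atTop (𝓝 0) := by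
      simpa using (tendsto_inv_atTop_nhds_zero_nat.const_mul (2 * B))
    simpa using h1.add h2
  have hsub : Tendsto (fun N => D N - L) atTop (𝓝 0) := by
    apply squeeze_zero_norm' _ hRHS
    refine eventually_atTop.mpr ⟨1, fun N hN => ?_⟩
    rw [Real.norm_eq_abs]
    exact key N hN
  have := hsub.add_const L
  simpa using this

/-- `(1/N) Σ g(w_i) χ_{y_{i,0} ≥ a} χ_{τ_i > t}` converges in probability
to `∫_a^1 ∫ g(w) e^{-wt} μ_{z,0}(dw) dz`. -/
theorem stmt13
    (Ω : Type) [MeasureSpace Ω] [IsProbabilityMeasure (ℙ : Measure Ω)]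
    (w : (N : ℕ) → Fin N → ℝ≥0) (hw : ∀ N i, 0 < w N i)
    (τ : (N : ℕ) → Fin N → Ω → ℝ)
    (hτmeas : ∀ N i, Measurable (τ N i))
    (hτindep : ∀ N, iIndepFun (τ N) ℙ)
    (hτdist : ∀ N i (t : ℝ), 0 ≤ t →
      (ℙ : Measure Ω) {ω | τ N i ω ≤ t} = ENNReal.ofReal (1 - rexp (-(w N i : ℝ) * t)))
    (x0 : (N : ℕ) → Fin N → ℕ)
    (hx0 : ∀ N, ∀ k ∈ Finset.Icc 1 N, ∃! i : Fin N, x0 N i = k)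
    (y0 : (N : ℕ) → Fin N → ℝ)
    (hy0 : ∀ N i, y0 N i = ((x0 N i : ℝ) - 1) / N)
    (μ0 : ℝ → Measure ℝ≥0) (hμ0 : ∀ z, IsProbabilityMeasure (μ0 z))
    (hμ0meas : ∀ g : ℝ≥0 →ᵇ ℝ, AEMeasurable (fun z => ∫ x, g x ∂(μ0 z)) volume)
    (hinit : ∀ g : ℝ≥0 →ᵇ ℝ,
      Tendsto (fun N : ℕ => ⨆ y : Ico (0 : ℝ) 1,
        |(N : ℝ)⁻¹ * (∑ i : Fin N, g (w N i) * (if y0 N i ≤ (y : ℝ) then (1 : ℝ) else 0))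
          - ∫ z in (0 : ℝ)..(y : ℝ), ∫ x, g x ∂(μ0 z)|) atTop (𝓝 0))
    (a : ℝ) (ha : a ∈ Ico (0 : ℝ) 1) (t : ℝ) (ht : 0 ≤ t) (g : ℝ≥0 →ᵇ ℝ) :
    ∀ ε > (0 : ℝ), Tendsto
      (fun N : ℕ => (ℙ : Measure Ω)
        {ω | ε ≤ |(N : ℝ)⁻¹ * (∑ i : Fin N, g (w N i)
              * (if a ≤ y0 N i then (1 : ℝ) else 0) * (if t < τ N i ω then (1 : ℝ) else 0))
            - ∫ z in a..1, ∫ x, g x * rexp (-(x : ℝ) * t) ∂(μ0 z)|})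
      atTop (𝓝 0) := by
  intro ε hε
  set G : ℝ≥0 →ᵇ ℝ := g * expBCF t ht with hGdef
  have hφB : ∀ z, |(fun z => ∫ x, G x ∂(μ0 z)) z| ≤ ‖G‖ := by
    intro z
    haveI := hμ0 z
    rw [← Real.norm_eq_abs]
    calc ‖∫ x, G x ∂(μ0 z)‖ ≤ ‖G‖ * ((μ0 z) univ).toReal :=
          norm_integral_le_of_norm_le_const
            (Filter.Eventually.of_forall fun x => G.norm_coe_le_norm x)
      _ = ‖G‖ := by simp
  have hφint : ∀ u v : ℝ, IntervalIntegrable (fun z => ∫ x, G x ∂(μ0 z)) volume u v := by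
    intro u v
    rw [intervalIntegrable_iff]
    haveI : IsFiniteMeasure (volume.restrict (Set.uIoc u v)) := by
      constructor
      rw [Measure.restrict_apply_univ]
      simp only [Set.uIoc, Real.volume_Ioc]
      exact ENNReal.ofReal_lt_top
    exact Integrable.mono' (integrable_const ‖G‖)
      ((hμ0meas G).aestronglyMeasurable.restrict)
      (Filter.Eventually.of_forall fun z => hφB z)
  have hhB : ∀ x : ℝ≥0, |G x| ≤ ‖G‖ := fun x => by
    rw [← Real.norm_eq_abs]; exact G.norm_coe_le_norm x
  have hdet := det_conv hx0 hy0 hφB hφint hhB (hinit G) ha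
  have hLeq : (∫ z in a..1, (fun z => ∫ x, G x ∂(μ0 z)) z)
      = ∫ z in a..1, ∫ x, g x * rexp (-(x : ℝ) * t) ∂(μ0 z) := rfl
  rw [hLeq] at hdet
  set Lt : ℝ := ∫ z in a..1, ∫ x, g x * rexp (-(x : ℝ) * t) ∂(μ0 z) with hLt
  set m : ℕ → ℝ := fun N =>
    (N:ℝ)⁻¹ * ∑ i : Fin N, G (w N i) * (if a ≤ y0 N i then (1:ℝ) else 0) with hm
  -- per-N probabilistic facts
  have key : ∀ N : ℕ,
      (ℙ : Measure Ω) {ω | ε/2 ≤ |(N:ℝ)⁻¹ * (∑ i : Fin N, g (w N i)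
          * (if a ≤ y0 N i then (1:ℝ) else 0) * (if t < τ N i ω then (1:ℝ) else 0)) - m N|}
        ≤ ENNReal.ofReal (((N:ℝ)⁻¹ * ‖g‖^2) / (ε/2)^2) := by
    intro N
    set X : Fin N → Ω → ℝ := fun i ω => g (w N i) * (if a ≤ y0 N i then (1:ℝ) else 0)
      * (if t < τ N i ω then (1:ℝ) else 0) with hXdef
    set S : Ω → ℝ := fun ω => (N:ℝ)⁻¹ * ∑ i : Fin N, X i ω with hSdef
    have hXmeas : ∀ i, Measurable (X i) := by
      intro i
      exact (Measurable.ite (measurableSet_lt measurable_const (hτmeas N i))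
        measurable_const measurable_const).const_mul _
    have hXbd : ∀ i ω, |X i ω| ≤ ‖g‖ := by
      intro i ω
      have h1 : |g (w N i)| ≤ ‖g‖ := by
        rw [← Real.norm_eq_abs]; exact g.norm_coe_le_norm _
      rw [hXdef]
      by_cases h2 : a ≤ y0 N i <;> by_cases h3 : t < τ N i ω <;>
        simp only [h2, h3, if_true, if_false, mul_one, mul_zero, zero_mul, abs_zero] <;>
        first | exact h1 | exact norm_nonneg g
    have hXmem : ∀ i, MemLp (X i) 2 ℙ := fun i =>
      MemLp.of_bound (hXmeas i).aestronglyMeasurable ‖g‖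
        (Filter.Eventually.of_forall fun ω => by rw [Real.norm_eq_abs]; exact hXbd i ω)
    have hSmeas : Measurable S :=
      (Finset.measurable_sum Finset.univ fun i _ => hXmeas i).const_mul _
    have hSmem : MemLp S 2 ℙ :=
      MemLp.of_bound hSmeas.aestronglyMeasurable ‖g‖
        (Filter.Eventually.of_forall fun ω => by
          rw [Real.norm_eq_abs]
          exact inv_mul_sum_abs_le _ (norm_nonneg g) fun i => hXbd i ω)
    have hindepX : iIndepFun X ℙ := by
      have := (hτindep N).comp
        (fun i s => g (w N i) * (if a ≤ y0 N i then (1:ℝ) else 0) * (if t < s then (1:ℝ) else 0))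
        (fun i => (Measurable.ite (measurableSet_lt measurable_const measurable_id)
          measurable_const measurable_const).const_mul _)
      exact this
    have hVarX : ∀ i, variance (X i) ℙ ≤ ‖g‖^2 := by
      intro i
      refine le_trans (variance_le_expectation_sq (hXmeas i).aestronglyMeasurable) ?_
      show (∫ ω, (X i ω)^2 ∂ℙ) ≤ ‖g‖^2
      calc (∫ ω, (X i ω)^2 ∂ℙ) ≤ ∫ _ω, ‖g‖^2 ∂ℙ := by
            refine integral_mono (hXmem i).integrable_sq (integrable_const _) fun ω => ?_
            have := abs_le.mp (hXbd i ω)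
            exact sq_le_sq' (by linarith) (by linarith)
        _ = ‖g‖^2 := by simp
    have hVarS : variance S ℙ ≤ (N:ℝ)⁻¹ * ‖g‖^2 := by
      have hfun : (fun ω => ∑ i : Fin N, X i ω) = ∑ i : Fin N, X i := by
        funext ω; rw [Finset.sum_apply]
      have h1 : variance S ℙ = ((N:ℝ)⁻¹)^2 * variance (∑ i : Fin N, X i) ℙ := by
        rw [hSdef, ← hfun]
        exact variance_const_mul _ _ _
      have h2 : variance (∑ i : Fin N, X i) ℙ = ∑ i : Fin N, variance (X i) ℙ :=
        IndepFun.variance_sum (fun i _ => hXmem i)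
          (fun i _ j _ hij => hindepX.indepFun hij)
      have h3 : ∑ i : Fin N, variance (X i) ℙ ≤ (N:ℝ) * ‖g‖^2 := by
        calc ∑ i : Fin N, variance (X i) ℙ ≤ ∑ _i : Fin N, ‖g‖^2 :=
              Finset.sum_le_sum fun i _ => hVarX i
          _ = (N:ℝ) * ‖g‖^2 := by simp [Finset.sum_const, nsmul_eq_mul]
      have hNN : ((N:ℝ)⁻¹)^2 * ((N:ℝ) * ‖g‖^2) ≤ (N:ℝ)⁻¹ * ‖g‖^2 := by
        rcases Nat.eq_zero_or_pos N with h0 | h0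
        · simp [h0]
        · have hNne : (N:ℝ) ≠ 0 := by exact_mod_cast h0.ne'
          rw [show ((N:ℝ)⁻¹)^2 * ((N:ℝ) * ‖g‖^2) = ((N:ℝ)⁻¹ * (N:ℝ)) * ((N:ℝ)⁻¹ * ‖g‖^2) by ring,
            inv_mul_cancel₀ hNne, one_mul]
      calc variance S ℙ = ((N:ℝ)⁻¹)^2 * variance (∑ i : Fin N, X i) ℙ := h1
        _ ≤ ((N:ℝ)⁻¹)^2 * ((N:ℝ) * ‖g‖^2) := by
            rw [h2]; exact mul_le_mul_of_nonneg_left h3 (by positivity)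
        _ ≤ (N:ℝ)⁻¹ * ‖g‖^2 := hNN
    -- expectation of X i
    have hEX : ∀ i, ∫ ω, X i ω ∂ℙ = G (w N i) * (if a ≤ y0 N i then (1:ℝ) else 0) := by
      intro i
      have hmeasset : MeasurableSet {ω | t < τ N i ω} :=
        measurableSet_lt measurable_const (hτmeas N i)
      have hind : (fun ω => if t < τ N i ω then (1:ℝ) else 0)
          = Set.indicator {ω | t < τ N i ω} (fun _ => (1:ℝ)) := by
        funext ω
        by_cases hc : t < τ N i ω <;> simp [Set.indicator_apply, hc]
      have hint : ∫ ω, (if t < τ N i ω then (1:ℝ) else 0) ∂ℙ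
          = ((ℙ : Measure Ω) {ω | t < τ N i ω}).toReal := by
        rw [hind]
        exact integral_indicator_one hmeasset
      have he1 : rexp (-(w N i:ℝ) * t) ≤ 1 := by
        refine Real.exp_le_one_iff.mpr ?_
        rw [neg_mul, neg_nonpos]
        exact mul_nonneg (w N i).coe_nonneg ht
      have hP : (ℙ : Measure Ω) {ω | t < τ N i ω}
          = ENNReal.ofReal (rexp (-(w N i:ℝ) * t)) := by
        have hset : {ω | t < τ N i ω} = {ω | τ N i ω ≤ t}ᶜ := by ext ω; simp [not_le]
        have hmeas2 : MeasurableSet {ω | τ N i ω ≤ t} :=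
          measurableSet_le (hτmeas N i) measurable_const
        rw [hset, measure_compl hmeas2 (measure_ne_top _ _), hτdist N i t ht, measure_univ,
          ← ENNReal.ofReal_one,
          ← ENNReal.ofReal_sub 1 (by linarith : (0:ℝ) ≤ 1 - rexp (-(w N i:ℝ)*t))]
        congr 1
        ring
      have : ∫ ω, X i ω ∂ℙ = (g (w N i) * (if a ≤ y0 N i then (1:ℝ) else 0))
          * rexp (-(w N i:ℝ) * t) := by
        rw [hXdef]
        rw [show (fun ω => g (w N i) * (if a ≤ y0 N i then (1:ℝ) else 0)
            * (if t < τ N i ω then (1:ℝ) else 0))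
          = fun ω => (g (w N i) * (if a ≤ y0 N i then (1:ℝ) else 0))
            * (if t < τ N i ω then (1:ℝ) else 0) from rfl,
          integral_const_mul, hint, hP, ENNReal.toReal_ofReal (Real.exp_pos _).le]
      rw [this]
      have hGw : G (w N i) = g (w N i) * rexp (-(w N i:ℝ) * t) := rfl
      rw [hGw]
      ring
    have hES : ∫ ω, S ω ∂ℙ = m N := by
      rw [hSdef]
      rw [show (fun ω => (N:ℝ)⁻¹ * ∑ i : Fin N, X i ω)
          = fun ω => (N:ℝ)⁻¹ * ∑ i : Fin N, X i ω from rfl, integral_const_mul,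
        integral_finset_sum Finset.univ (fun i _ => (hXmem i).integrable one_le_two)]
      rw [hm]
      congr 1
      exact Finset.sum_congr rfl fun i _ => hEX i
    have hcheb := meas_ge_le_variance_div_sq (μ := ℙ) hSmem (half_pos hε)
    rw [show (∫ ω, S ω ∂ℙ) = m N from hES] at hcheb
    refine le_trans hcheb ?_
    apply ENNReal.ofReal_le_ofReal
    gcongr
  -- assemble
  have hupper : Tendsto (fun N : ℕ => ENNReal.ofReal (((N:ℝ)⁻¹ * ‖g‖^2) / (ε/2)^2))
      atTop (𝓝 0) := by
    have h1 : Tendsto (fun N : ℕ => ((N:ℝ)⁻¹ * ‖g‖^2) / (ε/2)^2) atTop (𝓝 0) := by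
      have h0 := (_root_.tendsto_inv_atTop_nhds_zero_nat).mul_const (‖g‖^2 / (ε/2)^2)
      rw [zero_mul] at h0
      exact h0.congr fun N => by ring
    have := ENNReal.tendsto_ofReal h1
    simpa using this
  have hev : ∀ᶠ N in atTop, |m N - Lt| ≤ ε/2 := by
    obtain ⟨N0, hN0⟩ := Metric.tendsto_atTop.mp hdet (ε/2) (half_pos hε)
    refine eventually_atTop.mpr ⟨N0, fun n hn => ?_⟩
    have := hN0 n hn
    rw [Real.dist_eq] at this
    linarith
  refine tendsto_of_tendsto_of_tendsto_of_le_of_le' tendsto_const_nhds hupper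
    (Filter.Eventually.of_forall fun N => zero_le) ?_
  filter_upwards [hev] with N hN
  refine le_trans (measure_mono ?_) (key N)
  intro ω hω
  simp only [Set.mem_setOf_eq] at hω ⊢
  have habs := abs_sub_le ((N:ℝ)⁻¹ * (∑ i : Fin N, g (w N i)
      * (if a ≤ y0 N i then (1:ℝ) else 0) * (if t < τ N i ω then (1:ℝ) else 0))) (m N) Lt
  linarith
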